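/- Let s, t ≥ 1 be natural numbers and let w ∈ Row(s,t) have pair sequence pairs(w) = ((a_0,b_0),(a_1,b_1),...,(a_k,b_k)). Then there exists a vector v ∈ Row(t,s), unique up to cyclic permutation, whose pair sequence is a cyclic permutation of ((b_0,a_1),(b_1,a_2),...,(b_{k-1},a_k),(b_k,a_0)). Moreover, the cyclic equivalence class ⟨v⟩ depends only on the cyclic equivalence class ⟨w⟩, so that the complement ⟨w⟩^c := ⟨v⟩ is a well-defined class in Row(t,s). -/

import Mathlib

/-- The list of positions of the nonzero entries of `w`. -/
def nzPos (w : List ℕ) : List ℕ :=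
  (List.range w.length).filter (fun i => w.getD i 0 ≠ 0)

/-- The pair sequence of `w`: each nonzero entry of `w` together with the cyclic
distance from its position to the next nonzero position. -/
def pairsOf (w : List ℕ) : List (ℕ × ℕ) :=
  (List.range (nzPos w).length).map (fun j =>
    (w.getD ((nzPos w).getD j 0) 0,
     if j + 1 = (nzPos w).length then (nzPos w).getD 0 0 + w.length - (nzPos w).getD j 0
     else (nzPos w).getD (j + 1) 0 - (nzPos w).getD j 0))

/-- The complemented pair sequence: `((a₀,b₀),...,(a_k,b_k)) ↦ ((b₀,a₁),(b₁,a₂),...,(b_k,a₀))`. -/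
def complPairs (p : List (ℕ × ℕ)) : List (ℕ × ℕ) :=
  (p.map Prod.snd).zip ((p.map Prod.fst).rotate 1)

/-- `v` is a complement of `w`: `v ∈ Row(t,s)` (where `w ∈ Row(s,t)`) and the pair sequence
of `v` is a cyclic permutation of the complemented pair sequence of `w`. -/
def IsComplementOf (w v : List ℕ) : Prop :=
  v.length = w.sum ∧ v.sum = w.length ∧ pairsOf v ~r complPairs (pairsOf w)

theorem mem_nzPos {w : List ℕ} {i : ℕ} : i ∈ nzPos w ↔ i < w.length ∧ w.getD i 0 ≠ 0 := by
  simp [nzPos, List.mem_filter, List.mem_range]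

theorem nzPos_sorted (w : List ℕ) : (nzPos w).Pairwise (· < ·) :=
  List.pairwise_lt_range.filter _

theorem nzPos_cons (x : ℕ) (u : List ℕ) :
    nzPos (x :: u) = (if x = 0 then [] else [0]) ++ (nzPos u).map (· + 1) := by
  unfold nzPos
  rw [show (x :: u).length = u.length + 1 from rfl, List.range_succ_eq_map, List.filter_cons]
  have hmap : (List.range u.length).map Nat.succ = (List.range u.length).map (· + 1) := by
    simp
  rw [hmap, List.filter_map]
  have h2 : List.filter ((fun i => decide ((x :: u).getD i 0 ≠ 0)) ∘ (· + 1)) (List.range u.length)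
      = List.filter (fun i => decide (u.getD i 0 ≠ 0)) (List.range u.length) := by
    apply List.filter_congr
    intro i _
    simp only [Function.comp, List.getD_cons_succ]
  rw [h2]
  by_cases hx : x = 0 <;> simp [hx, List.getD_cons_zero]

theorem nzPos_append_zero (u : List ℕ) : nzPos (u ++ [0]) = nzPos u := by
  unfold nzPos
  have hl : (u ++ [0]).length = u.length + 1 := by simp
  rw [hl, List.range_succ, List.filter_append]
  have h1 : List.filter (fun i => decide ((u ++ [0]).getD i 0 ≠ 0)) [u.length] = [] := by
    simp [List.getD_append_right u [0] 0 u.length le_rfl]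
  have h2 : List.filter (fun i => decide ((u ++ [0]).getD i 0 ≠ 0)) (List.range u.length)
      = List.filter (fun i => decide (u.getD i 0 ≠ 0)) (List.range u.length) := by
    apply List.filter_congr
    intro i hi
    rw [List.mem_range] at hi
    rw [List.getD_append u [0] 0 i hi]
  rw [h1, h2, List.append_nil]


theorem getD_map_nat {l : List ℕ} {j : ℕ} (h : j < l.length) (f : ℕ → ℕ) (d : ℕ) :
    (l.map f).getD j d = f (l.getD j d) := by
  rw [List.getD_eq_getElem _ _ (by simpa using h), List.getElem_map,
    List.getD_eq_getElem _ _ h]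

theorem getD_mem_nzPos {u : List ℕ} {j : ℕ} (h : j < (nzPos u).length) :
    (nzPos u).getD j 0 ∈ nzPos u := by
  rw [List.getD_eq_getElem _ _ h]; exact List.getElem_mem _

theorem pairsOf_zero_cons (u : List ℕ) : pairsOf (0 :: u) = pairsOf (u ++ [0]) := by
  have h1 : nzPos (0 :: u) = (nzPos u).map (· + 1) := by rw [nzPos_cons]; simp
  unfold pairsOf
  rw [h1, nzPos_append_zero, List.length_map]
  apply List.map_congr_left
  intro j hj
  rw [List.mem_range] at hj
  have h0 : 0 < (nzPos u).length := by omega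
  have hjlen := (mem_nzPos.mp (getD_mem_nzPos hj)).1
  have e0 : ((nzPos u).map (· + 1)).getD 0 0 = (nzPos u).getD 0 0 + 1 := getD_map_nat h0 _ _
  have ej : ((nzPos u).map (· + 1)).getD j 0 = (nzPos u).getD j 0 + 1 := getD_map_nat hj _ _
  have hval : (0 :: u).getD ((nzPos u).getD j 0 + 1) 0 = (u ++ [0]).getD ((nzPos u).getD j 0) 0 := by
    rw [List.getD_cons_succ, List.getD_append u [0] 0 _ hjlen]
  split_ifs with hc
  · refine Prod.ext ?_ ?_
    · simp only [ej, hval]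
    · simp only [ej, e0, List.length_cons, List.length_append, List.length_singleton, List.length_nil]
      omega
  · have hj1 : j + 1 < (nzPos u).length := Nat.lt_of_le_of_ne hj hc
    have ej1 : ((nzPos u).map (· + 1)).getD (j + 1) 0 = (nzPos u).getD (j + 1) 0 + 1 :=
      getD_map_nat hj1 _ _
    refine Prod.ext ?_ ?_
    · simp only [ej, hval]
    · simp only [ej, ej1]
      omega


theorem nzPos_ne_nil {w : List ℕ} (hw : w.sum ≠ 0) : nzPos w ≠ [] := by
  intro h
  apply hw
  rw [List.sum_eq_zero_iff]
  intro x hx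
  rcases List.mem_iff_getElem.mp hx with ⟨i, hi, rfl⟩
  by_contra hne
  have : i ∈ nzPos w := mem_nzPos.mpr ⟨hi, by rw [List.getD_eq_getElem _ _ hi]; exact hne⟩
  rw [h] at this
  exact List.not_mem_nil this

theorem nf_exists : ∀ (j : ℕ) (w : List ℕ), w.sum ≠ 0 → (nzPos w).getD 0 0 = j →
    ∃ n, (w.rotate n).getD 0 0 ≠ 0 ∧ pairsOf (w.rotate n) = pairsOf w := by
  intro j
  induction j with
  | zero =>
    intro w hw h0
    have hne : nzPos w ≠ [] := nzPos_ne_nil hw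
    have hlt : 0 < (nzPos w).length := List.length_pos_iff.mpr hne
    have hmem := mem_nzPos.mp (getD_mem_nzPos hlt)
    exact ⟨0, by rw [List.rotate_zero]; rw [h0] at hmem; exact hmem.2, by rw [List.rotate_zero]⟩
  | succ j ih =>
    intro w hw h0
    match w with
    | [] => simp at hw
    | x :: u =>
      by_cases hx : x = 0
      · subst hx
        have hsu : u.sum ≠ 0 := by simpa using hw
        have hnu : nzPos u ≠ [] := nzPos_ne_nil hsu
        have hlu : 0 < (nzPos u).length := List.length_pos_iff.mpr hnu
        have hcons : nzPos (0 :: u) = (nzPos u).map (· + 1) := by rw [nzPos_cons]; simp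
        have hfz : (nzPos u).getD 0 0 = j := by
          rw [hcons] at h0
          rw [getD_map_nat hlu] at h0
          omega
        have hfz' : (nzPos (u ++ [0])).getD 0 0 = j := by rw [nzPos_append_zero]; exact hfz
        have hsuz : (u ++ [0]).sum ≠ 0 := by simpa using hsu
        obtain ⟨n, hn1, hn2⟩ := ih (u ++ [0]) hsuz hfz'
        refine ⟨n + 1, ?_, ?_⟩
        · rwa [List.rotate_cons_succ]
        · rw [List.rotate_cons_succ, hn2, ← pairsOf_zero_cons]
      · exact ⟨0, by rw [List.rotate_zero]; simpa using hx, by rw [List.rotate_zero]⟩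

def fromPairs (p : List (ℕ × ℕ)) : List ℕ :=
  p.flatMap (fun cd => cd.1 :: List.replicate (cd.2 - 1) 0)

theorem fromPairs_nil : fromPairs [] = [] := rfl

theorem fromPairs_cons (c d : ℕ) (p : List (ℕ × ℕ)) :
    fromPairs ((c, d) :: p) = c :: (List.replicate (d - 1) 0 ++ fromPairs p) := by
  simp [fromPairs]

theorem fromPairs_append (p q : List (ℕ × ℕ)) :
    fromPairs (p ++ q) = fromPairs p ++ fromPairs q := List.flatMap_append

theorem nzPos_nil : nzPos ([] : List ℕ) = [] := rfl

theorem nzPos_replicate_append (m : ℕ) (u : List ℕ) :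
    nzPos (List.replicate m 0 ++ u) = (nzPos u).map (· + m) := by
  induction m with
  | zero =>
    simp only [List.replicate_zero, List.nil_append]
    rw [show ((· + 0) : ℕ → ℕ) = id by funext x; simp, List.map_id]
  | succ m ih =>
    rw [show List.replicate (m + 1) 0 ++ u = 0 :: (List.replicate m 0 ++ u) by simp [List.replicate_succ]]
    rw [nzPos_cons, ih]
    simp only [if_pos rfl, List.nil_append, List.map_map]
    congr 1

theorem pairsOf_block (a b m : ℕ) (u₂ : List ℕ) (ha : a ≠ 0) (hb : b ≠ 0) :
    pairsOf (a :: (List.replicate m 0 ++ b :: u₂)) = (a, m + 1) :: pairsOf (b :: u₂) := by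
  set v' := b :: u₂ with hv'
  set N := nzPos v' with hN
  have hN0 : N.getD 0 0 = 0 := by
    rw [hN, hv', nzPos_cons, if_neg hb]
    rfl
  have hNlen : 0 < N.length := by
    rw [hN, hv', nzPos_cons, if_neg hb]
    simp
  have hnz : nzPos (a :: (List.replicate m 0 ++ v')) = 0 :: N.map (· + (m + 1)) := by
    rw [nzPos_cons, if_neg ha, nzPos_replicate_append, List.map_map]
    simp only [List.singleton_append]
    congr 1
  have hlenN : (0 :: N.map (· + (m + 1))).length = N.length + 1 := by simp
  unfold pairsOf
  rw [hnz, hlenN, ← hN, List.range_succ_eq_map, List.map_cons, List.map_map]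
  have hgetD : ∀ i : ℕ, (a :: (List.replicate m 0 ++ v')).getD (i + (m + 1)) 0 = v'.getD i 0 := by
    intro i
    have : i + (m + 1) = (i + m) + 1 := by omega
    rw [this, List.getD_cons_succ, List.getD_append_right _ _ _ _ (by simp [List.length_replicate])]
    congr 1
    simp [List.length_replicate]
  congr 1
  · -- head: f 0 = (a, m + 1)
    have hc : ¬ (0 + 1 = N.length + 1) := by omega
    rw [if_neg hc]
    have e1 : (0 :: N.map (· + (m + 1))).getD (0 + 1) 0 = N.getD 0 0 + (m + 1) := by
      rw [List.getD_cons_succ, getD_map_nat hNlen]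
    simp only [List.getD_cons_zero, e1, hN0]
    norm_num
  · -- tail
    apply List.map_congr_left
    intro j hj
    rw [List.mem_range] at hj
    simp only [Function.comp]
    have ej : (0 :: N.map (· + (m + 1))).getD (j + 1) 0 = N.getD j 0 + (m + 1) := by
      rw [List.getD_cons_succ, getD_map_nat hj]
    have hcond : (j + 1 + 1 = N.length + 1) ↔ (j + 1 = N.length) := by omega
    by_cases hc : j + 1 = N.length
    · rw [if_pos (by omega), if_pos hc, ej, hgetD]
      refine Prod.ext rfl ?_
      simp only [List.getD_cons_zero, hN0]
      have hlenv : (a :: (List.replicate m 0 ++ v')).length = v'.length + m + 1 := by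
        simp [List.length_replicate]; omega
      rw [hlenv]
      omega
    · have hj1 : j + 1 < N.length := by omega
      have ej1 : (0 :: N.map (· + (m + 1))).getD (j + 1 + 1) 0 = N.getD (j + 1) 0 + (m + 1) := by
        rw [List.getD_cons_succ, getD_map_nat hj1]
      rw [if_neg (by omega), if_neg hc, ej, ej1, hgetD]
      refine Prod.ext rfl ?_
      omega

theorem pairsOf_single_block (a m : ℕ) (ha : a ≠ 0) :
    pairsOf (a :: List.replicate m 0) = [(a, m + 1)] := by
  have h1 : nzPos (a :: List.replicate m 0) = [0] := by
    rw [nzPos_cons, if_neg ha]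
    have : nzPos (List.replicate m 0) = [] := by
      have := nzPos_replicate_append m []
      simpa [nzPos_nil] using this
    rw [this]
    simp
  unfold pairsOf
  rw [h1]
  simp only [List.length_singleton, show List.range 1 = [0] from rfl, List.map_cons, List.map_nil]
  norm_num [List.getD_cons_zero, List.length_replicate]

theorem leading_zeros_decomp : ∀ (u : List ℕ), ∃ m u', u = List.replicate m 0 ++ u' ∧
    (u' = [] ∨ u'.getD 0 0 ≠ 0) := by
  intro u
  induction u with
  | nil => exact ⟨0, [], rfl, Or.inl rfl⟩
  | cons x rest ih =>
    by_cases hx : x = 0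
    · obtain ⟨m, u', he, h2⟩ := ih
      exact ⟨m + 1, u', by rw [List.replicate_succ, hx]; simp [he], h2⟩
    · exact ⟨0, x :: rest, rfl, Or.inr (by simpa using hx)⟩

theorem recovery_aux : ∀ (n : ℕ) (v : List ℕ), v.length ≤ n → v.getD 0 0 ≠ 0 →
    v = fromPairs (pairsOf v) := by
  intro n
  induction n with
  | zero =>
    intro v hlen hv
    have : v = [] := List.length_eq_zero_iff.mp (Nat.le_zero.mp hlen)
    subst this
    simp at hv
  | succ n ih =>
    intro v hlen hv
    match v with
    | [] => simp at hv
    | a :: u =>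
      have ha : a ≠ 0 := by simpa using hv
      obtain ⟨m, u', he, h2⟩ := leading_zeros_decomp u
      rcases h2 with h2 | h2
      · subst h2
        rw [List.append_nil] at he
        subst he
        rw [pairsOf_single_block a m ha, fromPairs_cons]
        simp [fromPairs_nil]
      · match u', h2 with
        | b :: u₂, h2 =>
          have hb : b ≠ 0 := by simpa using h2
          subst he
          rw [pairsOf_block a b m u₂ ha hb, fromPairs_cons]
          simp only [Nat.add_sub_cancel]
          congr 2
          apply ih (b :: u₂) _ h2
          have := hlen
          simp [List.length_replicate] at this ⊢
          omega

theorem recovery (v : List ℕ) (hv : v.getD 0 0 ≠ 0) : v = fromPairs (pairsOf v) :=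
  recovery_aux v.length v le_rfl hv

theorem pairsOf_fromPairs : ∀ (p : List (ℕ × ℕ)), p ≠ [] →
    (∀ x ∈ p, 1 ≤ x.1 ∧ 1 ≤ x.2) → pairsOf (fromPairs p) = p := by
  intro p
  induction p with
  | nil => intro h; exact absurd rfl h
  | cons cd p' ih =>
    intro _ hval
    obtain ⟨c, d⟩ := cd
    have hc : c ≠ 0 := by have := (hval (c, d) (by simp)).1; omega
    have hd : 1 ≤ d := (hval (c, d) (by simp)).2
    match p' with
    | [] =>
      rw [fromPairs_cons, fromPairs_nil, List.append_nil, pairsOf_single_block c (d - 1) hc]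
      have : d - 1 + 1 = d := by omega
      rw [this]
    | (c', d') :: rest =>
      have hc' : c' ≠ 0 := by have := (hval (c', d') (by simp)).1; omega
      rw [fromPairs_cons, fromPairs_cons, pairsOf_block c c' (d - 1) _ hc hc',
        ← fromPairs_cons c' d' rest,
        ih (by simp) (fun x hx => hval x (List.mem_cons_of_mem _ hx))]
      have : d - 1 + 1 = d := by omega
      rw [this]

theorem pairsOf_pos (w : List ℕ) : ∀ x ∈ pairsOf w, 1 ≤ x.1 ∧ 1 ≤ x.2 := by
  intro x hx
  unfold pairsOf at hx
  rcases List.mem_map.mp hx with ⟨j, hj, rfl⟩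
  rw [List.mem_range] at hj
  have hmem := mem_nzPos.mp (getD_mem_nzPos hj)
  constructor
  · exact Nat.one_le_iff_ne_zero.mpr hmem.2
  · by_cases hcond : j + 1 = (nzPos w).length
    · rw [if_pos hcond]
      have := hmem.1
      omega
    · rw [if_neg hcond]
      have hj1 : j + 1 < (nzPos w).length := Nat.lt_of_le_of_ne hj hcond
      have hsorted := List.pairwise_iff_getElem.mp (nzPos_sorted w) j (j + 1) hj hj1 (by omega)
      rw [List.getD_eq_getElem _ _ hj, List.getD_eq_getElem _ _ hj1]
      omega

theorem fromPairs_length : ∀ (p : List (ℕ × ℕ)), (∀ x ∈ p, 1 ≤ x.2) →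
    (fromPairs p).length = (p.map Prod.snd).sum := by
  intro p
  induction p with
  | nil => simp [fromPairs_nil]
  | cons cd p' ih =>
    intro hval
    obtain ⟨c, d⟩ := cd
    rw [fromPairs_cons]
    simp only [List.length_cons, List.length_append, List.length_replicate, List.map_cons,
      List.sum_cons]
    rw [ih (fun x hx => hval x (List.mem_cons_of_mem _ hx))]
    have : 1 ≤ d := hval (c, d) (by simp)
    omega

theorem fromPairs_sum : ∀ (p : List (ℕ × ℕ)), (fromPairs p).sum = (p.map Prod.fst).sum := by
  intro p
  induction p with
  | nil => simp [fromPairs_nil]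
  | cons cd p' ih =>
    obtain ⟨c, d⟩ := cd
    rw [fromPairs_cons]
    simp [List.sum_replicate, ih]

theorem fromPairs_nzchar : ∀ (p : List (ℕ × ℕ)), (∀ x ∈ p, 1 ≤ x.1 ∧ 1 ≤ x.2) →
    ∀ m, m < (fromPairs p).length → (fromPairs p).getD m 0 ≠ 0 →
    ∃ q ≤ p.length, ((p.take q).map Prod.snd).sum = m := by
  intro p
  induction p with
  | nil => intro _ m hm; simp [fromPairs_nil] at hm
  | cons cd p' ih =>
    intro hval m hm hnz
    obtain ⟨c, d⟩ := cd
    have hd : 1 ≤ d := (hval (c, d) (by simp)).2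
    rw [fromPairs_cons] at hm hnz
    match m with
    | 0 => exact ⟨0, by simp, by simp⟩
    | m₀ + 1 =>
      rw [List.getD_cons_succ] at hnz
      by_cases hcase : m₀ < d - 1
      · exfalso
        apply hnz
        rw [List.getD_append _ _ _ _ (by simpa using hcase),
          List.getD_eq_getElem _ _ (by simpa using hcase), List.getElem_replicate]
      · push_neg at hcase
        rw [List.getD_append_right _ _ _ _ (by simpa using hcase)] at hnz
        simp only [List.length_replicate] at hnz
        have hm' : m₀ - (d - 1) < (fromPairs p').length := by
          simp only [List.length_cons, List.length_append, List.length_replicate] at hm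
          omega
        obtain ⟨q', hq'le, hq'⟩ := ih (fun x hx => hval x (List.mem_cons_of_mem _ hx))
          (m₀ - (d - 1)) hm' hnz
        refine ⟨q' + 1, by simpa using hq'le, ?_⟩
        simp only [List.take_succ_cons, List.map_cons, List.sum_cons, hq']
        omega

theorem pairsOf_length_pos {v : List ℕ} (h0 : v.getD 0 0 ≠ 0) : pairsOf v ≠ [] := by
  have hvne : v ≠ [] := by intro h; subst h; simp at h0
  have h0mem : (0 : ℕ) ∈ nzPos v := mem_nzPos.mpr ⟨List.length_pos_iff.mpr hvne, h0⟩
  intro h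
  unfold pairsOf at h
  rw [List.map_eq_nil_iff, List.range_eq_nil, List.length_eq_zero_iff] at h
  rw [h] at h0mem
  exact List.not_mem_nil h0mem

theorem pairsOf_rotate_of_nz (v : List ℕ) (q : ℕ) (h0 : v.getD 0 0 ≠ 0)
    (h1 : (v.rotate q).getD 0 0 ≠ 0) : pairsOf (v.rotate q) ~r pairsOf v := by
  have hvne : v ≠ [] := by intro h; subst h; simp at h0
  have hlen : 0 < v.length := List.length_pos_iff.mpr hvne
  set m := q % v.length with hmdef
  have hm : m < v.length := Nat.mod_lt _ hlen
  have hrot : v.rotate m = v.rotate q := List.rotate_mod v q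
  have hgm : v.getD m 0 ≠ 0 := by
    rw [← hrot] at h1
    rw [List.getD_eq_getElem _ _ (show (0:ℕ) < (v.rotate m).length by
      rw [List.length_rotate]; omega), List.getElem_rotate] at h1
    rw [List.getD_eq_getElem _ _ hm]
    simpa [Nat.mod_eq_of_lt hm] using h1
  have hp := recovery v h0
  have hval := pairsOf_pos v
  set p := pairsOf v with hpdef
  have hpne : p ≠ [] := pairsOf_length_pos h0
  have hmlt : m < (fromPairs p).length := by rw [← hp]; exact hm
  obtain ⟨q', hq'le, hq'⟩ := fromPairs_nzchar p hval m hmlt (by rwa [← hp])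
  have hvalt : ∀ x ∈ p.take q', 1 ≤ x.1 ∧ 1 ≤ x.2 := fun x hx => hval x (List.mem_of_mem_take hx)
  have hAlen : (fromPairs (p.take q')).length = m := by
    rw [fromPairs_length _ (fun x hx => (hvalt x hx).2), hq']
  have hsplit : fromPairs p = fromPairs (p.take q') ++ fromPairs (p.drop q') := by
    rw [← fromPairs_append, List.take_append_drop]
  have hrot2 : v.rotate m = fromPairs (p.rotate q') := by
    rw [hp, hsplit, List.rotate_eq_drop_append_take (by rw [← hsplit, ← hp]; omega)]
    rw [← hAlen, List.drop_left, List.take_left, ← fromPairs_append,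
      ← List.rotate_eq_drop_append_take hq'le]
  have hprotne : p.rotate q' ≠ [] := by
    intro h
    apply hpne
    have := congrArg List.length h
    rw [List.length_rotate] at this
    exact List.length_eq_zero_iff.mp this
  have hvalrot : ∀ x ∈ p.rotate q', 1 ≤ x.1 ∧ 1 ≤ x.2 := fun x hx =>
    hval x (List.mem_rotate.mp hx)
  rw [← hrot, hrot2, pairsOf_fromPairs _ hprotne hvalrot]
  exact List.IsRotated.symm ⟨q', rfl⟩

theorem fromPairs_rotate (p : List (ℕ × ℕ)) (n : ℕ) :
    fromPairs (p.rotate n) ~r fromPairs p := by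
  by_cases hp : p = []
  · subst hp; rw [List.rotate_nil]
  · have hlen : 0 < p.length := List.length_pos_iff.mpr hp
    rw [← List.rotate_mod, List.rotate_eq_drop_append_take (le_of_lt (Nat.mod_lt _ hlen)),
      fromPairs_append]
    calc fromPairs (p.drop (n % p.length)) ++ fromPairs (p.take (n % p.length))
        ~r fromPairs (p.take (n % p.length)) ++ fromPairs (p.drop (n % p.length)) :=
          List.isRotated_append
      _ = fromPairs p := by rw [← fromPairs_append, List.take_append_drop]

theorem pairsOf_rotate {w : List ℕ} (hsum : w.sum ≠ 0) (n : ℕ) :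
    pairsOf (w.rotate n) ~r pairsOf w := by
  obtain ⟨n₁, hhead₁, heq₁⟩ := nf_exists ((nzPos w).getD 0 0) w hsum rfl
  have hsum' : (w.rotate n).sum ≠ 0 := by rwa [(List.rotate_perm w n).sum_eq]
  obtain ⟨n₂, hhead₂, heq₂⟩ := nf_exists ((nzPos (w.rotate n)).getD 0 0) (w.rotate n) hsum' rfl
  rw [List.rotate_rotate] at hhead₂ heq₂
  have hrot : w.rotate n₁ ~r w.rotate (n + n₂) :=
    (List.IsRotated.symm ⟨n₁, rfl⟩).trans ⟨n + n₂, rfl⟩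
  obtain ⟨q, hq⟩ := hrot
  have := pairsOf_rotate_of_nz (w.rotate n₁) q hhead₁ (by rw [hq]; exact hhead₂)
  rw [hq, heq₂, heq₁] at this
  exact this

set_option maxHeartbeats 1000000 in
theorem complement_unique {v v' : List ℕ} (hv : v.sum ≠ 0) (hv' : v'.sum ≠ 0)
    (h : pairsOf v ~r pairsOf v') : v ~r v' := by
  obtain ⟨n₁, hhead₁, heq₁⟩ := nf_exists ((nzPos v).getD 0 0) v hv rfl
  obtain ⟨n₂, hhead₂, heq₂⟩ := nf_exists ((nzPos v').getD 0 0) v' hv' rfl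
  have hrec₁ := recovery _ hhead₁
  have hrec₂ := recovery _ hhead₂
  have hpp : pairsOf (v.rotate n₁) ~r pairsOf (v'.rotate n₂) := by
    rw [heq₁, heq₂]; exact h
  obtain ⟨r, hr⟩ := hpp
  have h2 : v'.rotate n₂ ~r v.rotate n₁ :=
    calc v'.rotate n₂ = fromPairs (pairsOf (v'.rotate n₂)) := hrec₂
      _ = fromPairs ((pairsOf (v.rotate n₁)).rotate r) := by rw [hr]
      _ ~r fromPairs (pairsOf (v.rotate n₁)) := fromPairs_rotate _ r
      _ = v.rotate n₁ := hrec₁.symm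
  exact List.IsRotated.trans (⟨n₁, rfl⟩ : v ~r v.rotate n₁)
    (List.IsRotated.trans h2.symm (List.IsRotated.symm ⟨n₂, rfl⟩))

theorem pairsOf_sums {w : List ℕ} (hsum : w.sum ≠ 0) :
    ((pairsOf w).map Prod.fst).sum = w.sum ∧ ((pairsOf w).map Prod.snd).sum = w.length := by
  obtain ⟨n, hhead, heq⟩ := nf_exists _ w hsum rfl
  have hrec := recovery _ hhead
  have hval := pairsOf_pos (w.rotate n)
  constructor
  · rw [← heq, ← fromPairs_sum, ← hrec, (List.rotate_perm w n).sum_eq]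
  · rw [← heq, ← fromPairs_length _ (fun x hx => (hval x hx).2), ← hrec, List.length_rotate]

theorem pairsOf_ne_nil {w : List ℕ} (hsum : w.sum ≠ 0) : pairsOf w ≠ [] := by
  intro h
  unfold pairsOf at h
  rw [List.map_eq_nil_iff, List.range_eq_nil, List.length_eq_zero_iff] at h
  exact nzPos_ne_nil hsum h


theorem zip_rotate {α β : Type} (l : List α) (l' : List β) (h : l.length = l'.length) (n : ℕ) :
    (l.rotate n).zip (l'.rotate n) = (l.zip l').rotate n := by
  apply List.ext_getElem
  · simp [h]
  · intro i h₁ h₂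
    simp only [List.getElem_zip, List.getElem_rotate, List.length_zip, h, Nat.min_self]

theorem complPairs_rotate (p : List (ℕ × ℕ)) (n : ℕ) :
    complPairs (p.rotate n) = (complPairs p).rotate n := by
  unfold complPairs
  rw [List.map_rotate, List.map_rotate, List.rotate_rotate, Nat.add_comm n 1,
    ← List.rotate_rotate, zip_rotate _ _ (by simp) n]

theorem complPairs_isRotated {p p' : List (ℕ × ℕ)} (h : p ~r p') :
    complPairs p ~r complPairs p' := by
  obtain ⟨n, rfl⟩ := h
  exact ⟨n, (complPairs_rotate p n).symm⟩

theorem map_fst_complPairs (p : List (ℕ × ℕ)) :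
    (complPairs p).map Prod.fst = p.map Prod.snd :=
  List.map_fst_zip (by simp)

theorem map_snd_complPairs (p : List (ℕ × ℕ)) :
    (complPairs p).map Prod.snd = (p.map Prod.fst).rotate 1 :=
  List.map_snd_zip (by simp)

theorem complPairs_pos {p : List (ℕ × ℕ)} (hp : ∀ x ∈ p, 1 ≤ x.1 ∧ 1 ≤ x.2) :
    ∀ x ∈ complPairs p, 1 ≤ x.1 ∧ 1 ≤ x.2 := by
  intro x hx
  obtain ⟨a, b⟩ := x
  obtain ⟨ha, hb⟩ := List.of_mem_zip hx
  rcases List.mem_map.mp ha with ⟨y, hy, rfl⟩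
  rcases List.mem_map.mp (List.mem_rotate.mp hb) with ⟨z, hz, rfl⟩
  exact ⟨(hp y hy).2, (hp z hz).1⟩

theorem complPairs_ne_nil {p : List (ℕ × ℕ)} (hp : p ≠ []) : complPairs p ≠ [] := by
  intro h
  apply hp
  have := congrArg List.length h
  simp only [complPairs, List.length_zip, List.length_rotate, List.length_map,
    Nat.min_self, List.length_nil] at this
  exact List.length_eq_zero_iff.mp this



/-- For `w ∈ Row(s,t)` there exists a vector `v ∈ Row(t,s)`, unique up to cyclic permutation,
whose pair sequence is a cyclic permutation of the complemented pair sequence of `w`; moreover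
its cyclic class depends only on the cyclic class of `w`, so the complement `⟨w⟩ᶜ := ⟨v⟩`
is a well-defined class in `Row(t,s)`. -/
theorem complement_exists_unique_welldefined (s t : ℕ) (hs : 1 ≤ s) (ht : 1 ≤ t)
    (w : List ℕ) (hlen : w.length = s) (hsum : w.sum = t) :
    (∃ v : List ℕ, IsComplementOf w v) ∧
    (∀ v v' : List ℕ, IsComplementOf w v → IsComplementOf w v' → v ~r v') ∧
    (∀ w' v v' : List ℕ, w ~r w' → IsComplementOf w v → IsComplementOf w' v' → v ~r v') := by
  have hsumw : w.sum ≠ 0 := by omega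
  have key : ∀ w' v v' : List ℕ, w ~r w' → IsComplementOf w v → IsComplementOf w' v' →
      v ~r v' := by
    intro w' v v' hww' hcv hcv'
    have hsum' : w'.sum = w.sum := (hww'.perm.sum_eq).symm
    have hlen' : w'.length = w.length := hww'.perm.length_eq.symm
    obtain ⟨n, rfl⟩ := hww'
    have hpc : complPairs (pairsOf w) ~r complPairs (pairsOf (w.rotate n)) :=
      complPairs_isRotated (pairsOf_rotate hsumw n).symm
    have hpp : pairsOf v ~r pairsOf v' :=
      (hcv.2.2.trans hpc).trans hcv'.2.2.symm
    exact complement_unique (by rw [hcv.2.1]; omega) (by rw [hcv'.2.1, hlen']; omega) hpp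
  refine ⟨?_, fun v v' h h' => key w v v' (List.IsRotated.refl w) h h', key⟩
  -- existence
  set P := pairsOf w with hP
  have hPpos := pairsOf_pos w
  have hPne : P ≠ [] := pairsOf_ne_nil hsumw
  have hPsums := pairsOf_sums hsumw
  set C := complPairs P with hC
  have hCpos : ∀ x ∈ C, 1 ≤ x.1 ∧ 1 ≤ x.2 := complPairs_pos hPpos
  have hCne : C ≠ [] := complPairs_ne_nil hPne
  refine ⟨fromPairs C, ?_, ?_, ?_⟩
  · rw [fromPairs_length _ (fun x hx => (hCpos x hx).2), map_snd_complPairs,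
      (List.rotate_perm _ _).sum_eq, hPsums.1]
  · rw [fromPairs_sum, map_fst_complPairs, hPsums.2]
  · rw [pairsOf_fromPairs C hCne hCpos]
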